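/- Let a ∈ M_n(ℂ). If there exist positive semidefinite b, c ∈ M_n(ℂ) with b_{ii} ≤ 1, c_{ii} ≤ 1 for all i, such that the block matrix [[b, a*],[a, c]] ∈ M_{2n}(ℂ) is positive semidefinite, then the Schur multiplier norm of a satisfies ‖a‖_S ≤ 1, i.e., ‖a ∘ x‖ ≤ ‖x‖ for all x ∈ M_n(ℂ). -/

import Mathlib

set_option synthInstance.maxHeartbeats 1000000
set_option maxHeartbeats 1000000

open scoped ComplexOrder

noncomputable section

/-- The operator norm of a complex `n × n` matrix, acting on `ℓ²({1,…,n})`. -/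
def opNorm {m : Type*} [Fintype m] [DecidableEq m] (a : Matrix m m ℂ) : ℝ :=
  ‖Matrix.toEuclideanCLM (𝕜 := ℂ) a‖

namespace SchurAux

open Matrix

variable {m : Type*} [Fintype m] [DecidableEq m]

lemma isHermitian_hadamard {M N : Matrix m m ℂ} (hM : M.IsHermitian) (hN : N.IsHermitian) :
    (M.hadamard N).IsHermitian := by
  ext i j
  simp only [conjTranspose_apply, hadamard_apply, star_mul']
  rw [mul_comm, ← conjTranspose_apply, ← conjTranspose_apply, hM, hN, mul_comm]

open scoped MatrixOrder in
lemma exists_eq_conjTranspose_mul_self {M : Matrix m m ℂ} (hM : M.PosSemidef) :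
    ∃ A : Matrix m m ℂ, M = Aᴴ * A := by
  refine ⟨CFC.sqrt M, ?_⟩
  rw [(CFC.sqrt_nonneg M).posSemidef.isHermitian.eq, CFC.sqrt_mul_sqrt_self M hM.nonneg]

lemma inner_equiv_symm (x y : m → ℂ) :
    inner ℂ ((WithLp.equiv 2 (m → ℂ)).symm x) ((WithLp.equiv 2 (m → ℂ)).symm y)
      = star x ⬝ᵥ y :=
  (EuclideanSpace.inner_toLp_toLp x y).trans (dotProduct_comm _ _)

lemma toEuclideanCLM_equiv_symm (A : Matrix m m ℂ) (x : m → ℂ) :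
    Matrix.toEuclideanCLM (𝕜 := ℂ) A ((WithLp.equiv 2 (m → ℂ)).symm x)
      = (WithLp.equiv 2 (m → ℂ)).symm (A *ᵥ x) := rfl

/-- Schur product theorem. -/
lemma hadamard_posSemidef {M N : Matrix m m ℂ} (hM : M.PosSemidef) (hN : N.PosSemidef) :
    (M.hadamard N).PosSemidef := by
  obtain ⟨A, rfl⟩ := exists_eq_conjTranspose_mul_self hM
  refine PosSemidef.of_dotProduct_mulVec_nonneg
    (isHermitian_hadamard (Matrix.posSemidef_conjTranspose_mul_self A).1 hN.1) fun v => ?_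
  have key : star v ⬝ᵥ ((Aᴴ * A).hadamard N *ᵥ v)
      = ∑ k, star (fun j => A k j * v j) ⬝ᵥ (N *ᵥ fun j => A k j * v j) := by
    calc star v ⬝ᵥ ((Aᴴ * A).hadamard N *ᵥ v)
        = ∑ i, ∑ k, ∑ j, star (A k i) * star (v i) * (N i j * (A k j * v j)) := by
          refine Finset.sum_congr rfl fun i _ => ?_
          rw [Pi.star_apply, mulVec, dotProduct, Finset.mul_sum]
          simp only [hadamard_apply, mul_apply, conjTranspose_apply, Finset.sum_mul,
            Finset.mul_sum]
          rw [Finset.sum_comm]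
          exact Finset.sum_congr rfl fun k _ => Finset.sum_congr rfl fun j _ => by ring
      _ = ∑ k, ∑ i, ∑ j, star (A k i) * star (v i) * (N i j * (A k j * v j)) :=
          Finset.sum_comm
      _ = ∑ k, star (fun j => A k j * v j) ⬝ᵥ (N *ᵥ fun j => A k j * v j) := by
          refine Finset.sum_congr rfl fun k _ => Finset.sum_congr rfl fun i _ => ?_
          rw [Pi.star_apply, mulVec, dotProduct, star_mul', Finset.mul_sum]
  rw [key]
  exact Finset.sum_nonneg fun k _ => hN.dotProduct_mulVec_nonneg _

lemma star_dot_self (v : m → ℂ) :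
    star v ⬝ᵥ v = ((‖(WithLp.equiv 2 (m → ℂ)).symm v‖ : ℂ)) ^ 2 := by
  rw [← inner_equiv_symm, inner_self_eq_norm_sq_to_K]; norm_num

lemma re_star_dot_self (v : m → ℂ) :
    (star v ⬝ᵥ v).re = ‖(WithLp.equiv 2 (m → ℂ)).symm v‖ ^ 2 := by
  rw [star_dot_self]
  rw [← Complex.ofReal_pow, Complex.ofReal_re]

/-- If `‖x‖ ≤ 1` then `1 - x xᴴ ⪰ 0`. -/
lemma contraction_psd {n : ℕ} {x : Matrix (Fin n) (Fin n) ℂ}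
    (h : ‖Matrix.toEuclideanCLM (𝕜 := ℂ) x‖ ≤ 1) : (1 - x * xᴴ).PosSemidef := by
  apply PosSemidef.of_dotProduct_mulVec_nonneg
  · simp [Matrix.IsHermitian, conjTranspose_sub, conjTranspose_mul]
  · intro v
    have h1 : star v ⬝ᵥ ((1 - x * xᴴ) *ᵥ v)
        = star v ⬝ᵥ v - star (xᴴ *ᵥ v) ⬝ᵥ (xᴴ *ᵥ v) := by
      rw [sub_mulVec, dotProduct_sub, one_mulVec, star_mulVec, conjTranspose_conjTranspose,
        ← dotProduct_mulVec, mulVec_mulVec]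
    have hn : ‖(WithLp.equiv 2 (Fin n → ℂ)).symm (xᴴ *ᵥ v)‖
        ≤ ‖(WithLp.equiv 2 (Fin n → ℂ)).symm v‖ := by
      have h2 : (WithLp.equiv 2 (Fin n → ℂ)).symm (xᴴ *ᵥ v)
          = Matrix.toEuclideanCLM (𝕜 := ℂ) xᴴ ((WithLp.equiv 2 (Fin n → ℂ)).symm v) :=
        (toEuclideanCLM_equiv_symm xᴴ v).symm
      rw [h2]
      calc ‖Matrix.toEuclideanCLM (𝕜 := ℂ) xᴴ ((WithLp.equiv 2 (Fin n → ℂ)).symm v)‖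
          ≤ ‖Matrix.toEuclideanCLM (𝕜 := ℂ) xᴴ‖ * ‖(WithLp.equiv 2 (Fin n → ℂ)).symm v‖ :=
            ContinuousLinearMap.le_opNorm _ _
        _ ≤ 1 * ‖(WithLp.equiv 2 (Fin n → ℂ)).symm v‖ := by
            gcongr
            rw [show xᴴ = star x from rfl, map_star, ContinuousLinearMap.star_eq_adjoint,
              LinearIsometryEquiv.norm_map]
            exact h
        _ = ‖(WithLp.equiv 2 (Fin n → ℂ)).symm v‖ := one_mul _
    rw [h1, star_dot_self, star_dot_self]
    have : (0:ℝ) ≤ ‖(WithLp.equiv 2 (Fin n → ℂ)).symm v‖ ^ 2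
        - ‖(WithLp.equiv 2 (Fin n → ℂ)).symm (xᴴ *ᵥ v)‖ ^ 2 := by
      have := pow_le_pow_left₀ (norm_nonneg _) hn 2
      linarith
    calc (0:ℂ) = ((0:ℝ):ℂ) := by norm_num
      _ ≤ _ := by
          rw [← Complex.ofReal_pow, ← Complex.ofReal_pow, ← Complex.ofReal_sub]
          exact Complex.zero_le_real.mpr this

lemma hadamard_fromBlocks {n : ℕ} (b B a c A' a' c' A : Matrix (Fin n) (Fin n) ℂ) :
    (fromBlocks b A a c).hadamard (fromBlocks B A' a' c')
      = fromBlocks (b.hadamard B) (A.hadamard A') (a.hadamard a') (c.hadamard c') := by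
  ext (i | i) (j | j) <;> simp [hadamard_apply]

lemma hadamard_one_mulVec {n : ℕ} (M : Matrix (Fin n) (Fin n) ℂ) (w : Fin n → ℂ) :
    (M.hadamard 1) *ᵥ w = fun i => M i i * w i := by
  funext i
  simp only [mulVec, dotProduct, hadamard_apply, one_apply, mul_ite, mul_one, mul_zero,
    ite_mul, zero_mul]
  rw [Finset.sum_ite_eq]
  simp

/-- Diagonal bound: if `re (M i i) ≤ 1` then `re ⟨w, (M ⊙ 1) w⟩ ≤ ‖w‖²`. -/
lemma re_quad_hadamard_one_le {n : ℕ} (M : Matrix (Fin n) (Fin n) ℂ)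
    (hM : ∀ i, (M i i).re ≤ 1) (w : Fin n → ℂ) :
    (star w ⬝ᵥ ((M.hadamard 1) *ᵥ w)).re ≤ ‖(WithLp.equiv 2 (Fin n → ℂ)).symm w‖ ^ 2 := by
  rw [← re_star_dot_self, hadamard_one_mulVec]
  have h1 : (star w ⬝ᵥ fun i => M i i * w i)
      = ∑ i, M i i * (Complex.normSq (w i) : ℂ) := by
    refine Finset.sum_congr rfl fun i _ => ?_
    have e1 : (star w) i * (fun i => M i i * w i) i
        = M i i * ((starRingEnd ℂ) (w i) * w i) := by
      rw [Pi.star_apply, show (star (w i) : ℂ) = starRingEnd ℂ (w i) from rfl]; ring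
    rw [e1, ← Complex.normSq_eq_conj_mul_self]
  have h2 : (star w ⬝ᵥ w) = ∑ i, ((Complex.normSq (w i) : ℝ) : ℂ) := by
    refine Finset.sum_congr rfl fun i _ => ?_
    rw [Pi.star_apply, show (star (w i) : ℂ) = starRingEnd ℂ (w i) from rfl,
      ← Complex.normSq_eq_conj_mul_self]
  rw [h1, h2, Complex.re_sum, Complex.re_sum]
  refine Finset.sum_le_sum fun i _ => ?_
  rw [show (M i i * (Complex.normSq (w i) : ℂ)).re
      = (M i i).re * Complex.normSq (w i) by simp [Complex.mul_re]]
  rw [Complex.ofReal_re]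
  nlinarith [Complex.normSq_nonneg (w i), hM i]

end SchurAux

open Matrix SchurAux in
/-- If there are positive semidefinite `b, c` with diagonal entries `≤ 1` such that the block
matrix `[[b, a*], [a, c]]` is positive semidefinite, then `‖a ∘ x‖ ≤ ‖x‖` for every `x`,
i.e. the Schur multiplier norm of `a` is at most `1`. -/
theorem schur_le_one_of_posSemidef_block {n : ℕ} (a b c : Matrix (Fin n) (Fin n) ℂ)
    (hb : b.PosSemidef) (hc : c.PosSemidef)
    (hbd : ∀ i, Complex.re (b i i) ≤ 1) (hcd : ∀ i, Complex.re (c i i) ≤ 1)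
    (hblock : (Matrix.fromBlocks b a.conjTranspose a c).PosSemidef) :
    ∀ x : Matrix (Fin n) (Fin n) ℂ, opNorm (Matrix.hadamard a x) ≤ opNorm x := by
  -- Main case: matrices of operator norm ≤ 1
  have main : ∀ x : Matrix (Fin n) (Fin n) ℂ, opNorm x ≤ 1 → opNorm (a.hadamard x) ≤ 1 := by
    intro x hx
    -- The block matrix [[1, xᴴ],[x, 1]] is PSD
    have hxblock : (fromBlocks 1 xᴴ x 1 :
        Matrix (Sum (Fin n) (Fin n)) (Sum (Fin n) (Fin n)) ℂ).PosSemidef := by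
      haveI : Invertible (1 : Matrix (Fin n) (Fin n) ℂ) := invertibleOne
      have h1 : (1 : Matrix (Fin n) (Fin n) ℂ).PosDef := Matrix.PosDef.one
      have := (Matrix.PosDef.fromBlocks₁₁ (A := (1 : Matrix (Fin n) (Fin n) ℂ)) xᴴ 1 h1)
      rw [conjTranspose_conjTranspose] at this
      rw [this]
      have : (1 : Matrix (Fin n) (Fin n) ℂ) - x * (1 : Matrix (Fin n) (Fin n) ℂ)⁻¹ * xᴴ
          = 1 - x * xᴴ := by rw [inv_one, Matrix.mul_one]
      rw [this]
      exact contraction_psd hx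
    -- Schur product
    have hK : ((fromBlocks b aᴴ a c).hadamard (fromBlocks 1 xᴴ x 1)).PosSemidef :=
      hadamard_posSemidef hblock hxblock
    rw [hadamard_fromBlocks] at hK
    -- write the PSD block matrix as Lᴴ L
    obtain ⟨L, hL⟩ := exists_eq_conjTranspose_mul_self hK
    set y := a.hadamard x with hy
    -- key sesquilinear computations
    have quad : ∀ u₁ u₂ : Sum (Fin n) (Fin n) → ℂ,
        star u₁ ⬝ᵥ ((fromBlocks (b.hadamard 1) (aᴴ.hadamard xᴴ) y (c.hadamard 1)) *ᵥ u₂)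
          = star (L *ᵥ u₁) ⬝ᵥ (L *ᵥ u₂) := by
      intro u₁ u₂
      rw [hL, ← mulVec_mulVec, star_mulVec, ← dotProduct_mulVec]
    have dot1 : ∀ v w : Fin n → ℂ,
        star (Sum.elim (0 : Fin n → ℂ) w)
          ⬝ᵥ ((fromBlocks (b.hadamard 1) (aᴴ.hadamard xᴴ) y (c.hadamard 1))
            *ᵥ Sum.elim v 0) = star w ⬝ᵥ (y *ᵥ v) := by
      intro v w
      have hstar : star (Sum.elim (0 : Fin n → ℂ) w) = Sum.elim (0 : Fin n → ℂ) (star w) := by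
        funext i; cases i <;> simp
      rw [hstar, fromBlocks_mulVec]
      simp [sumElim_dotProduct_sumElim]
    have dotq : ∀ w : Fin n → ℂ,
        star (Sum.elim (0 : Fin n → ℂ) w)
          ⬝ᵥ ((fromBlocks (b.hadamard 1) (aᴴ.hadamard xᴴ) y (c.hadamard 1))
            *ᵥ Sum.elim 0 w) = star w ⬝ᵥ ((c.hadamard 1) *ᵥ w) := by
      intro w
      have hstar : star (Sum.elim (0 : Fin n → ℂ) w) = Sum.elim (0 : Fin n → ℂ) (star w) := by
        funext i; cases i <;> simp
      rw [hstar, fromBlocks_mulVec]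
      simp [sumElim_dotProduct_sumElim]
    have dotp : ∀ v : Fin n → ℂ,
        star (Sum.elim v (0 : Fin n → ℂ))
          ⬝ᵥ ((fromBlocks (b.hadamard 1) (aᴴ.hadamard xᴴ) y (c.hadamard 1))
            *ᵥ Sum.elim v 0) = star v ⬝ᵥ ((b.hadamard 1) *ᵥ v) := by
      intro v
      have hstar : star (Sum.elim v (0 : Fin n → ℂ)) = Sum.elim (star v) (0 : Fin n → ℂ) := by
        funext i; cases i <;> simp
      rw [hstar, fromBlocks_mulVec]
      simp [sumElim_dotProduct_sumElim]
    -- norms of L applied to the two embeddings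
    have normL1 : ∀ w : Fin n → ℂ,
        ‖(WithLp.equiv 2 _).symm (L *ᵥ Sum.elim (0 : Fin n → ℂ) w)‖
          ≤ ‖(WithLp.equiv 2 (Fin n → ℂ)).symm w‖ := by
      intro w
      have h1 : ‖(WithLp.equiv 2 _).symm (L *ᵥ Sum.elim (0 : Fin n → ℂ) w)‖ ^ 2
          ≤ ‖(WithLp.equiv 2 (Fin n → ℂ)).symm w‖ ^ 2 := by
        rw [← re_star_dot_self, ← quad, dotq]
        exact re_quad_hadamard_one_le c hcd w
      exact (pow_le_pow_iff_left₀ (norm_nonneg _) (norm_nonneg _) two_ne_zero).mp h1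
    have normL2 : ∀ v : Fin n → ℂ,
        ‖(WithLp.equiv 2 _).symm (L *ᵥ Sum.elim v (0 : Fin n → ℂ))‖
          ≤ ‖(WithLp.equiv 2 (Fin n → ℂ)).symm v‖ := by
      intro v
      have h1 : ‖(WithLp.equiv 2 _).symm (L *ᵥ Sum.elim v (0 : Fin n → ℂ))‖ ^ 2
          ≤ ‖(WithLp.equiv 2 (Fin n → ℂ)).symm v‖ ^ 2 := by
        rw [← re_star_dot_self, ← quad, dotp]
        exact re_quad_hadamard_one_le b hbd v
      exact (pow_le_pow_iff_left₀ (norm_nonneg _) (norm_nonneg _) two_ne_zero).mp h1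
    -- Cauchy–Schwarz: |⟨w, y v⟩| ≤ ‖w‖ ‖v‖
    have CS : ∀ v w : Fin n → ℂ, ‖star w ⬝ᵥ (y *ᵥ v)‖
        ≤ ‖(WithLp.equiv 2 (Fin n → ℂ)).symm w‖ * ‖(WithLp.equiv 2 (Fin n → ℂ)).symm v‖ := by
      intro v w
      rw [← dot1, quad]
      calc ‖star (L *ᵥ Sum.elim (0 : Fin n → ℂ) w) ⬝ᵥ (L *ᵥ Sum.elim v 0)‖
          = ‖(inner ℂ ((WithLp.equiv 2 _).symm (L *ᵥ Sum.elim (0 : Fin n → ℂ) w))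
              ((WithLp.equiv 2 _).symm (L *ᵥ Sum.elim v 0)) : ℂ)‖ := by
            rw [inner_equiv_symm]
        _ ≤ ‖(WithLp.equiv 2 _).symm (L *ᵥ Sum.elim (0 : Fin n → ℂ) w)‖
              * ‖(WithLp.equiv 2 _).symm (L *ᵥ Sum.elim v 0)‖ := norm_inner_le_norm _ _
        _ ≤ _ := mul_le_mul (normL1 w) (normL2 v) (norm_nonneg _) (norm_nonneg _)
    -- conclude ‖y v‖ ≤ ‖v‖
    have normy : ∀ v : Fin n → ℂ, ‖(WithLp.equiv 2 (Fin n → ℂ)).symm (y *ᵥ v)‖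
        ≤ ‖(WithLp.equiv 2 (Fin n → ℂ)).symm v‖ := by
      intro v
      have h1 := CS v (y *ᵥ v)
      rw [star_dot_self] at h1
      rw [← Complex.ofReal_pow, Complex.norm_real, Real.norm_eq_abs,
        abs_of_nonneg (by positivity)] at h1
      nlinarith [norm_nonneg ((WithLp.equiv 2 (Fin n → ℂ)).symm (y *ᵥ v)),
        norm_nonneg ((WithLp.equiv 2 (Fin n → ℂ)).symm v)]
    -- operator norm bound
    refine ContinuousLinearMap.opNorm_le_bound _ zero_le_one fun u => ?_
    rw [one_mul]
    have hu : u = (WithLp.equiv 2 (Fin n → ℂ)).symm (WithLp.equiv 2 (Fin n → ℂ) u) := by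
      simp
    rw [hu, toEuclideanCLM_equiv_symm]
    exact normy _
  -- scaling argument
  intro x
  by_cases h0 : opNorm x = 0
  · have hx0 : x = 0 := by
      have : Matrix.toEuclideanCLM (𝕜 := ℂ) x = 0 := by
        have := norm_eq_zero.mp h0
        exact this
      have := congrArg (Matrix.toEuclideanCLM (𝕜 := ℂ)).symm this
      simpa using this
    subst hx0
    rw [Matrix.hadamard_zero]
  · have hpos : 0 < opNorm x := lt_of_le_of_ne (norm_nonneg _) (Ne.symm h0)
    set r : ℝ := opNorm x
    have hsc : opNorm (((r : ℂ)⁻¹) • x) ≤ 1 := by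
      have : opNorm (((r : ℂ)⁻¹) • x) = ‖((r : ℂ)⁻¹)‖ * opNorm x := by
        unfold opNorm
        rw [_root_.map_smul]
        exact norm_smul ((r : ℂ)⁻¹) (Matrix.toEuclideanCLM (𝕜 := ℂ) x)
      rw [this]
      simp only [norm_inv, Complex.norm_real, Real.norm_eq_abs, abs_of_pos hpos]
      rw [inv_mul_cancel₀ (ne_of_gt hpos)]
    have hmain := main _ hsc
    have heq : a.hadamard x = (r : ℂ) • (a.hadamard (((r : ℂ)⁻¹) • x)) := by
      rw [Matrix.hadamard_smul, smul_smul, mul_inv_cancel₀ (by exact_mod_cast ne_of_gt hpos),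
        one_smul]
    rw [heq]
    have : opNorm ((r : ℂ) • (a.hadamard (((r : ℂ)⁻¹) • x)))
        = ‖(r : ℂ)‖ * opNorm (a.hadamard (((r : ℂ)⁻¹) • x)) := by
      unfold opNorm
      rw [_root_.map_smul]
      exact norm_smul ((r : ℂ)) (Matrix.toEuclideanCLM (𝕜 := ℂ) (a.hadamard (((r : ℂ)⁻¹) • x)))
    rw [this]
    simp only [Complex.norm_real, Real.norm_eq_abs, abs_of_pos hpos]
    calc r * opNorm (a.hadamard (((r : ℂ)⁻¹) • x)) ≤ r * 1 := by
          exact mul_le_mul_of_nonneg_left hmain (le_of_lt hpos)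
      _ = opNorm x := by rw [mul_one]

end
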